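/- Let A⊗̄_R B be an alternative twisted tensor product of algebras, σ_A : A → A and σ_B : B → B involutions, and define σ̄ : A⊗B → A⊗B by σ̄ := R∘(σ_B⊗σ_A)∘τ_{A,B}, i.e., σ̄(a⊗b) = σ_A(a)_R ⊗ σ_B(b)_R. Assume: R satisfies the braid relation (id_A⊗τ_{B,B})∘(R⊗id_B)∘(id_B⊗R) = (R⊗id_B)∘(id_B⊗R)∘(τ_{B,B}⊗id_A); R(B⊗A₀) ⊆ A₀⊗B; σ_A(A₀) ⊆ A₀; and σ̄² = id_{A⊗B}. Then σ̄ is an involution of the algebra A⊗̄_R B, i.e., an algebra antiautomorphism of A⊗̄_R B whose square is the identity. -/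

import Mathlib

open TensorProduct LinearMap

section TwistPreamble

variable (K : Type*) [Field K]
variable (A : Type*) [NonAssocRing A] [Module K A] [SMulCommClass K A A] [IsScalarTower K A A]
variable (B : Type*) [NonAssocRing B] [Module K B] [SMulCommClass K B B] [IsScalarTower K B B]

/-- Sweedler helper: sends `Σ aR ⊗ bR` in `A ⊗ B` to `Σ (aR * a'_r) ⊗ (bR)_r`,
where `R((bR) ⊗ a') = a'_r ⊗ (bR)_r`. -/
noncomputable def attpRmul (R : B ⊗[K] A →ₗ[K] A ⊗[K] B) (a' : A) :
    A ⊗[K] B →ₗ[K] A ⊗[K] B :=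
  (rTensor B (LinearMap.mul' K A)) ∘ₗ (TensorProduct.assoc K A A B).symm.toLinearMap ∘ₗ
    (lTensor A (R ∘ₗ (TensorProduct.mk K B A).flip a'))

/-- Sweedler helper: sends `Σ aR ⊗ b'R` in `A ⊗ B` to `Σ (aR)_r ⊗ (b'R * b_r)`,
where `R(b ⊗ aR) = (aR)_r ⊗ b_r`. -/
noncomputable def attpLmul (R : B ⊗[K] A →ₗ[K] A ⊗[K] B) (b : B) :
    A ⊗[K] B →ₗ[K] A ⊗[K] B :=
  (lTensor A ((LinearMap.mul' K B) ∘ₗ (TensorProduct.comm K B B).toLinearMap)) ∘ₗ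
    (TensorProduct.assoc K A B B).toLinearMap ∘ₗ
    (rTensor B (R ∘ₗ (TensorProduct.mk K B A) b))

/-- `R : B ⊗ A → A ⊗ B` is an alternative twisting map w.r.t. the decomposition
`A = K·1_A ⊕ A₀`. -/
def IsAltTwistingMap (A₀ : Submodule K A) (R : B ⊗[K] A →ₗ[K] A ⊗[K] B) : Prop :=
  (∀ a : A, R ((1 : B) ⊗ₜ[K] a) = a ⊗ₜ[K] (1 : B)) ∧
  (∀ b : B, R (b ⊗ₜ[K] (1 : A)) = (1 : A) ⊗ₜ[K] b) ∧
  (∀ (a a' : A) (b : B), R (b ⊗ₜ[K] (a * a')) = attpRmul K A B R a' (R (b ⊗ₜ[K] a))) ∧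
  (∀ a ∈ A₀, ∀ b b' : B, R ((b * b') ⊗ₜ[K] a) = attpLmul K A B R b (R (b' ⊗ₜ[K] a)))

/-- `m` is the multiplication of the alternative twisted tensor product `A ⊗̄_R B`:
`(1⊗b)(a'⊗b') = a'_R ⊗ b_R b'` and, for `a ∈ A₀`, `(a⊗b)(a'⊗b') = a a'_R ⊗ b' b_R`. -/
def IsAltMul (A₀ : Submodule K A) (R : B ⊗[K] A →ₗ[K] A ⊗[K] B)
    (m : A ⊗[K] B →ₗ[K] A ⊗[K] B →ₗ[K] A ⊗[K] B) : Prop :=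
  (∀ (b : B) (a' : A) (b' : B),
      m ((1 : A) ⊗ₜ[K] b) (a' ⊗ₜ[K] b') = (lTensor A (mulRight K b')) (R (b ⊗ₜ[K] a'))) ∧
  (∀ a ∈ A₀, ∀ (b : B) (a' : A) (b' : B),
      m (a ⊗ₜ[K] b) (a' ⊗ₜ[K] b') =
        (TensorProduct.map (mulLeft K a) (mulLeft K b')) (R (b ⊗ₜ[K] a')))

end TwistPreamble

section BraidPreamble

variable (K : Type*) [Field K]
variable (A : Type*) [NonAssocRing A] [Module K A] [SMulCommClass K A A] [IsScalarTower K A A]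
variable (B : Type*) [NonAssocRing B] [Module K B] [SMulCommClass K B B] [IsScalarTower K B B]

/-- The left-hand side `(id_A ⊗ τ_{B,B}) ∘ (R ⊗ id_B) ∘ (id_B ⊗ R)` of the braid
relation, as a map `B ⊗ (B ⊗ A) → A ⊗ (B ⊗ B)`. -/
noncomputable def braidL (R : B ⊗[K] A →ₗ[K] A ⊗[K] B) :
    B ⊗[K] (B ⊗[K] A) →ₗ[K] A ⊗[K] (B ⊗[K] B) :=
  (lTensor A (TensorProduct.comm K B B).toLinearMap) ∘ₗ
    (TensorProduct.assoc K A B B).toLinearMap ∘ₗ (rTensor B R) ∘ₗ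
    (TensorProduct.assoc K B A B).symm.toLinearMap ∘ₗ (lTensor B R)

/-- The right-hand side `(R ⊗ id_B) ∘ (id_B ⊗ R) ∘ (τ_{B,B} ⊗ id_A)` of the braid
relation, as a map `B ⊗ (B ⊗ A) → A ⊗ (B ⊗ B)`. -/
noncomputable def braidR (R : B ⊗[K] A →ₗ[K] A ⊗[K] B) :
    B ⊗[K] (B ⊗[K] A) →ₗ[K] A ⊗[K] (B ⊗[K] B) :=
  (TensorProduct.assoc K A B B).toLinearMap ∘ₗ (rTensor B R) ∘ₗ
    (TensorProduct.assoc K B A B).symm.toLinearMap ∘ₗ (lTensor B R) ∘ₗ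
    (TensorProduct.assoc K B B A).toLinearMap ∘ₗ
    (rTensor A (TensorProduct.comm K B B).toLinearMap) ∘ₗ
    (TensorProduct.assoc K B B A).symm.toLinearMap

end BraidPreamble

/-- The map `σ̄ := R ∘ (σ_B ⊗ σ_A) ∘ τ_{A,B} : A ⊗ B → A ⊗ B`,
i.e. `σ̄(a⊗b) = σ_A(a)_R ⊗ σ_B(b)_R`. -/
noncomputable def liftedInvol (K : Type*) [Field K]
    (A : Type*) [NonAssocRing A] [Module K A] [SMulCommClass K A A] [IsScalarTower K A A]
    (B : Type*) [NonAssocRing B] [Module K B] [SMulCommClass K B B] [IsScalarTower K B B]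
    (R : B ⊗[K] A →ₗ[K] A ⊗[K] B) (σA : A →ₗ[K] A) (σB : B →ₗ[K] B) :
    A ⊗[K] B →ₗ[K] A ⊗[K] B :=
  R ∘ₗ (TensorProduct.map σB σA) ∘ₗ (TensorProduct.comm K A B).toLinearMap

set_option synthInstance.maxHeartbeats 1000000
set_option maxHeartbeats 2000000

section Aux
variable {K : Type*} [Field K]
variable {A : Type*} [NonAssocRing A] [Module K A] [SMulCommClass K A A] [IsScalarTower K A A]
variable {B : Type*} [NonAssocRing B] [Module K B] [SMulCommClass K B B] [IsScalarTower K B B]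
variable (R : B ⊗[K] A →ₗ[K] A ⊗[K] B)

lemma attpLmul_tmul (b : B) (e : A) (f : B) :
    attpLmul K A B R b (e ⊗ₜ[K] f) = lTensor A (mulLeft K f) (R (b ⊗ₜ[K] e)) := by
  simp only [attpLmul, coe_comp, Function.comp_apply, rTensor_tmul, LinearEquiv.coe_coe,
    mk_apply]
  induction R (b ⊗ₜ[K] e) using TensorProduct.induction_on with
  | zero => simp
  | tmul c d => simp [mul'_apply, mulLeft_apply]
  | add u v hu hv => simp only [add_tmul, map_add, hu, hv]

lemma attpRmul_tmul (a' : A) (c : A) (d : B) :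
    attpRmul K A B R a' (c ⊗ₜ[K] d) = rTensor B (mulLeft K c) (R (d ⊗ₜ[K] a')) := by
  simp only [attpRmul, coe_comp, Function.comp_apply, lTensor_tmul, LinearEquiv.coe_coe,
    flip_apply, mk_apply]
  induction R (d ⊗ₜ[K] a') using TensorProduct.induction_on with
  | zero => simp
  | tmul c' d' => simp [mul'_apply, mulLeft_apply]
  | add u v hu hv => simp only [tmul_add, map_add, hu, hv]

lemma liftedInvol_tmul (σA : A →ₗ[K] A) (σB : B →ₗ[K] B) (a : A) (b : B) :
    liftedInvol K A B R σA σB (a ⊗ₜ[K] b) = R (σB b ⊗ₜ[K] σA a) := by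
  simp [liftedInvol]

lemma map_mulLeft_one_right (u : A) (t : A ⊗[K] B) :
    TensorProduct.map (mulLeft K u) (mulLeft K (1 : B)) t = rTensor B (mulLeft K u) t := by
  induction t using TensorProduct.induction_on with
  | zero => simp
  | tmul c d => simp [mulLeft_apply, one_mul]
  | add s t hs ht => simp only [map_add, hs, ht]

lemma map_mulLeft_split (a : A) (b' : B) (t : A ⊗[K] B) :
    TensorProduct.map (mulLeft K a) (mulLeft K b') t
      = rTensor B (mulLeft K a) (lTensor A (mulLeft K b') t) := by
  induction t using TensorProduct.induction_on with
  | zero => simp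
  | tmul c d => simp [mulLeft_apply]
  | add s t hs ht => simp only [map_add, hs, ht]

end Aux
section Aux2
variable {K : Type*} [Field K]
variable {A : Type*} [NonAssocRing A] [Module K A] [SMulCommClass K A A] [IsScalarTower K A A]
variable {B : Type*} [NonAssocRing B] [Module K B] [SMulCommClass K B B] [IsScalarTower K B B]
variable (R : B ⊗[K] A →ₗ[K] A ⊗[K] B)

lemma braidL_mul (b₁ b₂ : B) (a : A) :
    lTensor A (mul' K B) (braidL K A B R (b₁ ⊗ₜ[K] (b₂ ⊗ₜ[K] a)))
      = attpLmul K A B R b₁ (R (b₂ ⊗ₜ[K] a)) := by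
  simp only [braidL, coe_comp, Function.comp_apply, LinearEquiv.coe_coe, lTensor_tmul]
  induction R (b₂ ⊗ₜ[K] a) using TensorProduct.induction_on with
  | zero => simp
  | add u v hu hv => simp only [tmul_add, map_add, hu, hv]
  | tmul u v =>
    rw [attpLmul_tmul]
    simp only [assoc_symm_tmul, rTensor_tmul]
    induction R (b₁ ⊗ₜ[K] u) using TensorProduct.induction_on with
    | zero => simp
    | add s t hs ht => simp only [add_tmul, map_add, hs, ht]
    | tmul c d => simp [mul'_apply, mulLeft_apply]

lemma braidR_mul (m : A ⊗[K] B →ₗ[K] A ⊗[K] B →ₗ[K] A ⊗[K] B)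
    (hm1 : ∀ (b : B) (a' : A) (b' : B),
      m ((1 : A) ⊗ₜ[K] b) (a' ⊗ₜ[K] b') = (lTensor A (mulRight K b')) (R (b ⊗ₜ[K] a')))
    (b₁ b₂ : B) (a : A) :
    lTensor A (mul' K B) (braidR K A B R (b₁ ⊗ₜ[K] (b₂ ⊗ₜ[K] a)))
      = m ((1 : A) ⊗ₜ[K] b₂) (R (b₁ ⊗ₜ[K] a)) := by
  simp only [braidR, coe_comp, Function.comp_apply, LinearEquiv.coe_coe, assoc_symm_tmul,
    rTensor_tmul, comm_tmul, assoc_tmul, lTensor_tmul]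
  induction R (b₁ ⊗ₜ[K] a) using TensorProduct.induction_on with
  | zero => simp
  | add u v hu hv => simp only [tmul_add, map_add, hu, hv]
  | tmul e f =>
    rw [hm1 b₂ e f]
    simp only [assoc_symm_tmul, rTensor_tmul]
    induction R (b₂ ⊗ₜ[K] e) using TensorProduct.induction_on with
    | zero => simp
    | add s t hs ht => simp only [add_tmul, map_add, hs, ht]
    | tmul c d => simp [mul'_apply, mulRight_apply]

end Aux2
/-- under the braid relation, `R(B⊗A₀) ⊆ A₀⊗B`, `σ_A(A₀) ⊆ A₀` and
`σ̄² = id`, the map `σ̄ = R ∘ (σ_B ⊗ σ_A) ∘ τ_{A,B}` is an involution of the algebra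
`A ⊗̄_R B`: an antiautomorphism squaring to the identity and fixing the unit. -/
theorem stmt10 (K A B : Type*) [Field K]
    [NonAssocRing A] [Module K A] [SMulCommClass K A A] [IsScalarTower K A A]
    [NonAssocRing B] [Module K B] [SMulCommClass K B B] [IsScalarTower K B B]
    (A₀ : Submodule K A) (hdec : IsCompl (Submodule.span K {(1 : A)}) A₀)
    (R : B ⊗[K] A →ₗ[K] A ⊗[K] B) (hR : IsAltTwistingMap K A B A₀ R)
    (m : A ⊗[K] B →ₗ[K] A ⊗[K] B →ₗ[K] A ⊗[K] B) (hm : IsAltMul K A B A₀ R m)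
    (σA : A →ₗ[K] A) (hσAmul : ∀ x y : A, σA (x * y) = σA y * σA x)
    (hσAone : σA 1 = 1) (hσAinv : ∀ x : A, σA (σA x) = x)
    (σB : B →ₗ[K] B) (hσBmul : ∀ x y : B, σB (x * y) = σB y * σB x)
    (hσBone : σB 1 = 1) (hσBinv : ∀ x : B, σB (σB x) = x)
    (hbraid : braidL K A B R = braidR K A B R)
    (hR0 : Submodule.map R (LinearMap.range (lTensor B A₀.subtype)) ≤
      LinearMap.range (rTensor B A₀.subtype))
    (hσA0 : ∀ a ∈ A₀, σA a ∈ A₀)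
    (hsq : ∀ x : A ⊗[K] B, liftedInvol K A B R σA σB (liftedInvol K A B R σA σB x) = x) :
    (∀ x y : A ⊗[K] B,
        liftedInvol K A B R σA σB (m x y) =
          m (liftedInvol K A B R σA σB y) (liftedInvol K A B R σA σB x)) ∧
    liftedInvol K A B R σA σB ((1 : A) ⊗ₜ[K] (1 : B)) = (1 : A) ⊗ₜ[K] (1 : B) ∧
    (∀ x : A ⊗[K] B, liftedInvol K A B R σA σB (liftedInvol K A B R σA σB x) = x) := by
  obtain ⟨hR1, hR2, hR3, hR4⟩ := hR
  obtain ⟨hm1, hm2⟩ := hm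
  set S : A ⊗[K] B →ₗ[K] A ⊗[K] B := liftedInvol K A B R σA σB with hSdef
  have hStm : ∀ (a : A) (b : B), S (a ⊗ₜ[K] b) = R (σB b ⊗ₜ[K] σA a) := by
    intro a b; rw [hSdef, liftedInvol_tmul]
  -- σ̄(R(b⊗a)) = σA a ⊗ σB b
  have hSR : ∀ (a : A) (b : B), S (R (b ⊗ₜ[K] a)) = σA a ⊗ₜ[K] σB b := by
    intro a b
    have h := hsq (σA a ⊗ₜ[K] σB b)
    rw [hStm, hσAinv, hσBinv] at h
    exact h
  -- decomposition of A
  have hdecomp : ∀ a : A, ∃ k : K, ∃ z ∈ A₀, a = k • (1 : A) + z := by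
    intro a
    have ha : a ∈ Submodule.span K {(1 : A)} ⊔ A₀ := by
      rw [codisjoint_iff.mp hdec.codisjoint]; trivial
    obtain ⟨y, hy, z, hz, hyz⟩ := Submodule.mem_sup.mp ha
    obtain ⟨k, hk⟩ := Submodule.mem_span_singleton.mp hy
    exact ⟨k, z, hz, by rw [← hyz, hk]⟩
  -- membership: R(b ⊗ a) ∈ A₀ ⊗ B for a ∈ A₀
  have hmem : ∀ (b : B), ∀ a ∈ A₀, ∃ z : A₀ ⊗[K] B,
      rTensor B A₀.subtype z = R (b ⊗ₜ[K] a) := by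
    intro b a ha
    have h1 : b ⊗ₜ[K] a ∈ LinearMap.range (lTensor B A₀.subtype) :=
      ⟨b ⊗ₜ[K] (⟨a, ha⟩ : A₀), by simp⟩
    exact hR0 (Submodule.mem_map_of_mem h1)
  -- braid instance
  have hBI : ∀ (b₁ b₂ : B) (a : A),
      attpLmul K A B R b₁ (R (b₂ ⊗ₜ[K] a)) = m ((1 : A) ⊗ₜ[K] b₂) (R (b₁ ⊗ₜ[K] a)) := by
    intro b₁ b₂ a
    rw [← braidL_mul, hbraid, braidR_mul R m hm1]
  -- P5: (a⊗1)·z = (a·)⊗id z  for a ∈ A₀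
  have hP5 : ∀ a ∈ A₀, ∀ z : A ⊗[K] B,
      m (a ⊗ₜ[K] (1 : B)) z = rTensor B (mulLeft K a) z := by
    intro a ha z
    induction z using TensorProduct.induction_on with
    | zero => simp
    | add u v hu hv => simp only [map_add, hu, hv]
    | tmul e f =>
      rw [hm2 a ha 1 e f, hR1 e]
      simp [mulLeft_apply, mul_one]
  -- P6: z·(1⊗b') = id⊗(b'·) z  for z ∈ A₀ ⊗ B
  have hP6 : ∀ (b' : B) (z : A₀ ⊗[K] B),
      m (rTensor B A₀.subtype z) ((1 : A) ⊗ₜ[K] b')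
        = lTensor A (mulLeft K b') (rTensor B A₀.subtype z) := by
    intro b' z
    induction z using TensorProduct.induction_on with
    | zero => simp
    | add u v hu hv => simp only [map_add, LinearMap.add_apply, hu, hv]
    | tmul u v =>
      rw [rTensor_tmul]
      rw [hm2 (A₀.subtype u) u.2 v 1 b', hR2 v]
      simp [mulLeft_apply, mul_one]
  -- Q: (u⊗v)·w for u ∈ A₀
  have hQ : ∀ u ∈ A₀, ∀ (v : B) (w : A ⊗[K] B),
      m (u ⊗ₜ[K] v) w = rTensor B (mulLeft K u) (attpLmul K A B R v w) := by
    intro u hu v w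
    induction w using TensorProduct.induction_on with
    | zero => simp
    | add s t hs ht => simp only [map_add, hs, ht]
    | tmul e f =>
      rw [hm2 u hu v e f, attpLmul_tmul, map_mulLeft_split]
  -- σ̄ ∘ (a·)⊗id = attpRmul (σA a) ∘ σ̄
  have hSmul : ∀ (a : A) (t : A ⊗[K] B),
      S (rTensor B (mulLeft K a) t) = attpRmul K A B R (σA a) (S t) := by
    intro a t
    induction t using TensorProduct.induction_on with
    | zero => simp
    | add s t hs ht => simp only [map_add, hs, ht]
    | tmul c d =>
      rw [rTensor_tmul, mulLeft_apply, hStm, hStm, hσAmul, hR3]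
  -- dagger: σ̄(x·(1⊗b')) = (1⊗σB b')·σ̄(x)
  have hdag : ∀ (x : A ⊗[K] B) (b' : B),
      S (m x ((1 : A) ⊗ₜ[K] b')) = m ((1 : A) ⊗ₜ[K] σB b') (S x) := by
    have hc1 : ∀ (b b' : B),
        S (m ((1 : A) ⊗ₜ[K] b) ((1 : A) ⊗ₜ[K] b')) = m ((1 : A) ⊗ₜ[K] σB b') (S ((1 : A) ⊗ₜ[K] b)) := by
      intro b b'
      have e1 : m ((1 : A) ⊗ₜ[K] b) ((1 : A) ⊗ₜ[K] b') = (1 : A) ⊗ₜ[K] (b * b') := by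
        rw [hm1 b 1 b', hR2 b]; simp [mulRight_apply]
      have e2 : S ((1 : A) ⊗ₜ[K] b) = (1 : A) ⊗ₜ[K] σB b := by
        rw [hStm, hσAone, hR2]
      rw [e1, e2, hStm, hσAone, hσBmul, hR2, hm1 (σB b') 1 (σB b), hR2]
      simp [mulRight_apply]
    have hc2 : ∀ z ∈ A₀, ∀ (b b' : B),
        S (m (z ⊗ₜ[K] b) ((1 : A) ⊗ₜ[K] b')) = m ((1 : A) ⊗ₜ[K] σB b') (S (z ⊗ₜ[K] b)) := by
      intro z hz b b'
      have e1 : m (z ⊗ₜ[K] b) ((1 : A) ⊗ₜ[K] b') = z ⊗ₜ[K] (b' * b) := by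
        rw [hm2 z hz b 1 b', hR2 b]
        simp [mulLeft_apply, mul_one]
      rw [e1, hStm, hσBmul, hR4 (σA z) (hσA0 z hz) (σB b) (σB b'), hBI, hStm]
    intro x b'
    induction x using TensorProduct.induction_on with
    | zero => simp
    | add u v hu hv => simp only [map_add, LinearMap.add_apply, hu, hv]
    | tmul a b =>
      obtain ⟨k, z, hz, rfl⟩ := hdecomp a
      rw [add_tmul, ← smul_tmul']
      simp only [map_add, map_smul, LinearMap.add_apply, LinearMap.smul_apply]
      rw [hc1 b b', hc2 z hz b b']
  -- diamond: σ̄(x·(a'⊗1)) = (σA a'⊗1)·σ̄(x) for a' ∈ A₀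
  have hdia : ∀ (x : A ⊗[K] B), ∀ a' ∈ A₀,
      S (m x (a' ⊗ₜ[K] (1 : B))) = m (σA a' ⊗ₜ[K] (1 : B)) (S x) := by
    have hmr1 : ∀ t : A ⊗[K] B, lTensor A (mulRight K (1 : B)) t = t := by
      intro t
      induction t using TensorProduct.induction_on with
      | zero => simp
      | add s t hs ht => simp only [map_add, hs, ht]
      | tmul c d => simp [mulRight_apply, mul_one]
    have hc1 : ∀ (b : B), ∀ a' ∈ A₀,
        S (m ((1 : A) ⊗ₜ[K] b) (a' ⊗ₜ[K] (1 : B)))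
          = m (σA a' ⊗ₜ[K] (1 : B)) (S ((1 : A) ⊗ₜ[K] b)) := by
      intro b a' ha'
      have e2 : S ((1 : A) ⊗ₜ[K] b) = (1 : A) ⊗ₜ[K] σB b := by
        rw [hStm, hσAone, hR2]
      rw [hm1 b a' 1, hmr1, hSR, e2, hP5 (σA a') (hσA0 a' ha'), rTensor_tmul, mulLeft_apply,
        mul_one]
    have hc2 : ∀ z ∈ A₀, ∀ (b : B), ∀ a' ∈ A₀,
        S (m (z ⊗ₜ[K] b) (a' ⊗ₜ[K] (1 : B)))
          = m (σA a' ⊗ₜ[K] (1 : B)) (S (z ⊗ₜ[K] b)) := by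
      intro z hz b a' ha'
      rw [hm2 z hz b a' 1, map_mulLeft_one_right, hSmul, hSR, attpRmul_tmul,
        hP5 (σA a') (hσA0 a' ha'), hStm]
    intro x a' ha'
    induction x using TensorProduct.induction_on with
    | zero => simp
    | add u v hu hv => simp only [map_add, LinearMap.add_apply, hu, hv]
    | tmul a b =>
      obtain ⟨k, z, hz, rfl⟩ := hdecomp a
      rw [add_tmul, ← smul_tmul']
      simp only [map_add, map_smul, LinearMap.add_apply, LinearMap.smul_apply]
      rw [hc1 b a' ha', hc2 z hz b a' ha']
  -- double dagger: σ̄((1⊗b)·y) = σ̄(y)·(1⊗σB b)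
  have hddag : ∀ (b : B) (y : A ⊗[K] B),
      S (m ((1 : A) ⊗ₜ[K] b) y) = m (S y) ((1 : A) ⊗ₜ[K] σB b) := by
    intro b y
    have h1 := hdag (S y) (σB b)
    rw [hσBinv, hsq] at h1
    rw [← h1, hsq]
  -- diamond': σ̄((a⊗1)·y) = σ̄(y)·(σA a⊗1) for a ∈ A₀
  have hdia' : ∀ a ∈ A₀, ∀ (y : A ⊗[K] B),
      S (m (a ⊗ₜ[K] (1 : B)) y) = m (S y) (σA a ⊗ₜ[K] (1 : B)) := by
    intro a ha y
    have h1 := hdia (S y) (σA a) (hσA0 a ha)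
    rw [hσAinv, hsq] at h1
    rw [← h1, hsq]
  -- final lemma FL
  have hFL : ∀ (β : B), ∀ α ∈ A₀, ∀ (z : A₀ ⊗[K] B),
      m (lTensor A (mulRight K β) (rTensor B A₀.subtype z)) (α ⊗ₜ[K] (1 : B))
        = m (rTensor B A₀.subtype z) (R (β ⊗ₜ[K] α)) := by
    intro β α hα z
    induction z using TensorProduct.induction_on with
    | zero => simp
    | add s t hs ht => simp only [map_add, LinearMap.add_apply, hs, ht]
    | tmul u v =>
      rw [rTensor_tmul, lTensor_tmul, mulRight_apply,
        hm2 (A₀.subtype u) u.2 (v * β) α 1, map_mulLeft_one_right,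
        hR4 α hα v β, hQ (A₀.subtype u) u.2 v]
  -- case 4
  have hcase4 : ∀ a ∈ A₀, ∀ (b : B), ∀ a' ∈ A₀, ∀ (b' : B),
      S (m (a ⊗ₜ[K] b) (a' ⊗ₜ[K] b')) = m (S (a' ⊗ₜ[K] b')) (S (a ⊗ₜ[K] b)) := by
    intro a ha b a' ha' b'
    obtain ⟨w₀, hw₀⟩ := hmem b a' ha'
    obtain ⟨z', hz'⟩ := hmem (σB b') (σA a') (hσA0 a' ha')
    have efac : m (a ⊗ₜ[K] b) (a' ⊗ₜ[K] b')
        = m (a ⊗ₜ[K] (1 : B)) (m (R (b ⊗ₜ[K] a')) ((1 : A) ⊗ₜ[K] b')) := by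
      rw [hm2 a ha b a' b', map_mulLeft_split, ← hP5 a ha, ← hw₀, hP6 b' w₀]
    rw [efac, hdia' a ha, hdag, hSR, hm1 (σB b') (σA a') (σB b), hStm, hStm,
      ← hz', hFL (σB b) (σA a) (hσA0 a ha) z', hz']
  -- assembling the antimultiplicativity
  refine ⟨?_, ?_, hsq⟩
  · intro x y
    induction x using TensorProduct.induction_on with
    | zero => simp
    | add u v hu hv => simp only [map_add, LinearMap.add_apply, hu, hv]
    | tmul a b =>
      obtain ⟨k, z, hz, rfl⟩ := hdecomp a
      rw [add_tmul, ← smul_tmul']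
      simp only [map_add, map_smul, LinearMap.add_apply, LinearMap.smul_apply]
      have e2 : S ((1 : A) ⊗ₜ[K] b) = (1 : A) ⊗ₜ[K] σB b := by
        rw [hStm, hσAone, hR2]
      have hzb : S (m (z ⊗ₜ[K] b) y) = m (S y) (S (z ⊗ₜ[K] b)) := by
        induction y using TensorProduct.induction_on with
        | zero => simp
        | add s t hs ht => simp only [map_add, LinearMap.add_apply, hs, ht]
        | tmul a' b' =>
          obtain ⟨k', z', hz', rfl⟩ := hdecomp a'
          rw [add_tmul, ← smul_tmul']
          simp only [map_add, map_smul, LinearMap.add_apply, LinearMap.smul_apply]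
          have e2' : S ((1 : A) ⊗ₜ[K] b') = (1 : A) ⊗ₜ[K] σB b' := by
            rw [hStm, hσAone, hR2]
          rw [hdag (z ⊗ₜ[K] b) b', e2', hcase4 z hz b z' hz' b']
      rw [hddag b y, e2, hzb]
  · rw [hStm, hσAone, hσBone, hR1]
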